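/- Let X be a geometric data set and suppose the family L ⊆ Lip₁(ℝ) contains all translations. If F ⊆ F_X is L-closed (i.e., p ∘ f ∈ F for all p ∈ L, f ∈ F), then F is L-compact: for every ε > 0 there is a finite N ⊆ F such that every f ∈ F lies within Ky Fan distance ε of { p ∘ g : p ∈ L, g ∈ N }. -/

import Mathlib

open MeasureTheory Set
open scoped ENNReal

/-- The Ky Fan (extended) distance between two maps into a pseudo-emetric space. -/
noncomputable def eKyFan {X Y : Type*} [MeasurableSpace X] [PseudoEMetricSpace Y]
    (μ : Measure X) (f g : X → Y) : ℝ≥0∞ :=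
  sInf {ε : ℝ≥0∞ | μ {x | ε < edist (f x) (g x)} ≤ ε}

lemma tight_aux {X : Type*} [MetricSpace X] [CompleteSpace X]
    [TopologicalSpace.SeparableSpace X] [Nonempty X]
    [MeasurableSpace X] [OpensMeasurableSpace X]
    (μ : Measure X) [IsFiniteMeasure μ] {ε : ℝ≥0∞} (hε : 0 < ε) :
    ∃ C : Set X, IsCompact C ∧ μ Cᶜ ≤ ε := by
  classical
  set u := TopologicalSpace.denseSeq X with hu
  have hdense : DenseRange u := TopologicalSpace.denseRange_denseSeq X
  have H : ∀ n : ℕ, ∃ s : Set X, IsClosed s ∧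
      (∃ t : Set X, t.Finite ∧ s ⊆ ⋃ y ∈ t, Metric.closedBall y (1/(n+1 : ℝ))) ∧
      μ sᶜ < ε/2 * (2⁻¹ : ℝ≥0∞)^n := by
    intro n
    have hrpos : (0:ℝ) < 1/(n+1 : ℝ) := by positivity
    set S : ℕ → Set X := fun m => ⋃ i ∈ Finset.range (m+1), Metric.closedBall (u i) (1/(n+1 : ℝ))
      with hS
    have hmono : Monotone S := by
      intro a b hab x hx
      simp only [hS, mem_iUnion, Finset.mem_range] at hx ⊢
      obtain ⟨i, hi, hxi⟩ := hx
      exact ⟨i, by omega, hxi⟩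
    have hclosed : ∀ m, IsClosed (S m) := fun m =>
      isClosed_biUnion_finset fun i _ => Metric.isClosed_closedBall
    have hmeas : ∀ m, MeasurableSet (S m) := fun m => (hclosed m).measurableSet
    have huniv : ⋃ m, S m = univ := by
      ext x
      simp only [mem_iUnion, mem_univ, iff_true]
      obtain ⟨y, hy⟩ := Metric.denseRange_iff.mp hdense x _ hrpos
      exact ⟨y, by
        simp only [hS, mem_iUnion, Finset.mem_range]
        exact ⟨y, by omega, Metric.mem_closedBall.mpr hy.le⟩⟩
    have h1 : Filter.Tendsto (fun m => μ (S m)) Filter.atTop (nhds (μ univ)) := by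
      simpa [huniv, Function.comp_def] using tendsto_measure_iUnion_atTop (μ := μ) hmono
    have h3 : Filter.Tendsto (fun m => μ (S m)ᶜ) Filter.atTop (nhds 0) := by
      have h2 : ∀ m, μ (S m)ᶜ = μ univ - μ (S m) := fun m =>
        measure_compl (hmeas m) (measure_ne_top μ _)
      simp only [h2]
      have := ENNReal.Tendsto.sub (tendsto_const_nhds (x := μ univ)) h1
        (Or.inl (measure_ne_top μ _))
      simpa using this
    have hεn : (0:ℝ≥0∞) < ε/2 * (2⁻¹ : ℝ≥0∞)^n := by
      apply ENNReal.mul_pos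
      · exact (ENNReal.div_pos hε.ne' ENNReal.ofNat_ne_top).ne'
      · exact (pow_ne_zero n (ENNReal.inv_ne_zero.mpr ENNReal.ofNat_ne_top))
    obtain ⟨m, hm⟩ := (h3.eventually (gt_mem_nhds hεn)).exists
    exact ⟨S m, hclosed m, ⟨u '' (Finset.range (m+1) : Set ℕ), (Set.finite_range fun i : Finset.range (m+1) => u i).subset (by rintro _ ⟨i, hi, rfl⟩; exact ⟨⟨i, hi⟩, rfl⟩), by
      intro x hx
      simp only [hS, mem_iUnion, Finset.mem_range] at hx
      obtain ⟨i, hi, hxi⟩ := hx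
      exact mem_biUnion ⟨i, by simpa using hi, rfl⟩ hxi⟩, hm⟩
  choose s hscl hst hsμ using H
  refine ⟨⋂ n, s n, ?_, ?_⟩
  · apply TotallyBounded.isCompact_of_isClosed
    · rw [Metric.totallyBounded_iff]
      intro δ hδ
      obtain ⟨n, hn⟩ := exists_nat_one_div_lt hδ
      obtain ⟨t, htfin, hts⟩ := hst n
      refine ⟨t, htfin, ?_⟩
      intro x hx
      have hx' : x ∈ s n := mem_iInter.mp hx n
      obtain ⟨y, hy, hxy⟩ := mem_iUnion₂.mp (hts hx')
      exact mem_biUnion hy (Metric.closedBall_subset_ball hn hxy)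
    · exact isClosed_iInter hscl
  · rw [compl_iInter]
    calc μ (⋃ n, (s n)ᶜ) ≤ ∑' n, μ (s n)ᶜ := measure_iUnion_le _
      _ ≤ ∑' n, ε/2 * (2⁻¹ : ℝ≥0∞)^n := ENNReal.tsum_le_tsum fun n => (hsμ n).le
      _ = ε := by
        rw [ENNReal.tsum_mul_left, ENNReal.tsum_geometric, ENNReal.one_sub_inv_two, inv_inv,
          ENNReal.div_mul_cancel two_ne_zero ENNReal.ofNat_ne_top]

theorem lClosed_implies_lCompact {X : Type*}
    [MetricSpace X] [CompleteSpace X] [TopologicalSpace.SeparableSpace X]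
    [MeasurableSpace X] [BorelSpace X]
    (μ : Measure X) [IsProbabilityMeasure μ]
    (hsupp : ∀ U : Set X, IsOpen U → U.Nonempty → 0 < μ U)
    (FX : Set (X → ℝ)) (hFXne : FX.Nonempty)
    -- the feature family induces the (extended) metric of the carrier
    (hd : ∀ x y : X, edist x y = ⨆ f ∈ FX, edist (f x) (f y))
    (L : Set (ℝ → ℝ)) (hL : ∀ p ∈ L, LipschitzWith 1 p)
    (htrans : ∀ c : ℝ, (fun t => t + c) ∈ L)
    (F : Set (X → ℝ)) (hF : F ⊆ FX)
    (hLclosed : ∀ p ∈ L, ∀ f ∈ F, p ∘ f ∈ F) :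
    ∀ ε : ℝ, 0 < ε → ∃ N : Finset (X → ℝ), ↑N ⊆ F ∧
      ∀ f ∈ F, ∃ p ∈ L, ∃ g ∈ N, eKyFan μ f (p ∘ g) < ENNReal.ofReal ε := by
  classical
  intro ε hε
  -- X is nonempty
  have hXne : Nonempty X := by
    by_contra h
    rw [not_nonempty_iff] at h
    have h1 : (Set.univ : Set X) = ∅ := Set.univ_eq_empty_iff.mpr h
    have h2 := measure_univ (μ := μ)
    rw [h1, measure_empty] at h2
    exact zero_ne_one h2
  obtain ⟨x₀⟩ := hXne
  haveI : Nonempty X := ⟨x₀⟩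
  set δ : ℝ := ε/8 with hδdef
  have hδ : 0 < δ := by positivity
  -- all features are 1-Lipschitz
  have hLip : ∀ f ∈ FX, LipschitzWith 1 f := by
    intro f hf x y
    rw [ENNReal.coe_one, one_mul, hd x y]
    exact le_iSup₂ (f := fun g (_ : g ∈ FX) => edist (g x) (g y)) f hf
  -- a compact set of almost full measure
  obtain ⟨C, hC, hCc⟩ := tight_aux μ (ε := ENNReal.ofReal (ε/2))
    (ENNReal.ofReal_pos.mpr (by linarith))
  obtain ⟨R, hRsub⟩ := hC.isBounded.subset_closedBall x₀
  have hR : ∀ x ∈ C, dist x x₀ ≤ R := fun x hx => Metric.mem_closedBall.mp (hRsub hx)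
  obtain ⟨t, htC, htfin, htcov⟩ := hC.finite_cover_balls hδ
  haveI : Finite ↥t := htfin.to_subtype
  -- the set of recentered elements of F
  set K : Set (X → ℝ) := {g | g ∈ F ∧ g x₀ = 0} with hKdef
  have hKlip : ∀ g ∈ K, LipschitzWith 1 g := fun g hg => hLip g (hF hg.1)
  have hKbd : ∀ g ∈ K, ∀ x, |g x| ≤ dist x x₀ := by
    intro g hg x
    calc |g x| = dist (g x) (g x₀) := by rw [Real.dist_eq, hg.2, sub_zero]
      _ ≤ dist x x₀ := by simpa using (hKlip g hg).dist_le_mul x x₀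
  -- discretization code
  set code : (X → ℝ) → (↥t → ℤ) := fun g j => ⌊g j / δ⌋ with hcodedef
  have hcodefin : (code '' K).Finite := by
    apply (Set.Finite.pi (fun _ : ↥t => Set.finite_Icc ⌊(-R)/δ⌋ ⌊R/δ⌋)).subset
    rintro _ ⟨g, hg, rfl⟩
    rw [Set.mem_univ_pi]
    intro j
    have hjC : (j : X) ∈ C := htC j.2
    have hb : |g j| ≤ R := (hKbd g hg j).trans (hR _ hjC)
    rw [abs_le] at hb
    constructor
    · exact Int.floor_mono ((div_le_div_iff_of_pos_right hδ).mpr hb.1)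
    · exact Int.floor_mono ((div_le_div_iff_of_pos_right hδ).mpr hb.2)
  -- representatives
  set rep : (↥t → ℤ) → (X → ℝ) := fun c =>
    if h : ∃ g ∈ K, code g = c then h.choose else fun _ => 0 with hrepdef
  have hrep : ∀ c ∈ code '' K, rep c ∈ K ∧ code (rep c) = c := by
    rintro c ⟨g, hg, rfl⟩
    have h : ∃ g' ∈ K, code g' = code g := ⟨g, hg, rfl⟩
    simp only [hrepdef, dif_pos h]
    exact ⟨h.choose_spec.1, h.choose_spec.2⟩
  refine ⟨hcodefin.toFinset.image rep, ?_, ?_⟩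
  · intro g hg
    obtain ⟨c, hc, rfl⟩ := Finset.mem_image.mp hg
    exact (hrep c (hcodefin.mem_toFinset.mp hc)).1.1
  · intro f hfF
    -- recenter f
    set g : X → ℝ := (fun s => s + -(f x₀)) ∘ f with hgdef
    have hgF : g ∈ F := hLclosed _ (htrans (-(f x₀))) f hfF
    have hgx : ∀ x, g x = f x - f x₀ := fun x => by
      simp [hgdef, Function.comp, sub_eq_add_neg]
    have hgK : g ∈ K := ⟨hgF, by rw [hgx]; ring⟩
    have hcmem : code g ∈ code '' K := mem_image_of_mem _ hgK
    set g' : X → ℝ := rep (code g) with hg'def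
    obtain ⟨hg'K, hg'c⟩ := hrep _ hcmem
    have hg'N : g' ∈ hcodefin.toFinset.image rep :=
      Finset.mem_image_of_mem rep (hcodefin.mem_toFinset.mpr hcmem)
    refine ⟨fun s => s + f x₀, htrans (f x₀), g', hg'N, ?_⟩
    -- floor lemma
    have hfloor : ∀ a b : ℝ, ⌊a/δ⌋ = ⌊b/δ⌋ → |a - b| < δ := by
      intro a b hab
      have h1 := Int.floor_le (a/δ)
      have h2 := Int.lt_floor_add_one (a/δ)
      have h3 := Int.floor_le (b/δ)
      have h4 := Int.lt_floor_add_one (b/δ)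
      rw [hab] at h1 h2
      have h5 : |a/δ - b/δ| < 1 := abs_sub_lt_iff.mpr ⟨by linarith, by linarith⟩
      have h6 : a - b = δ * (a/δ - b/δ) := by field_simp
      rw [h6, abs_mul, abs_of_pos hδ]
      calc δ * |a/δ - b/δ| < δ * 1 := (mul_lt_mul_iff_right₀ hδ).mpr h5
        _ = δ := mul_one δ
    -- uniform closeness on C
    have key : ∀ x ∈ C, dist (f x) (((fun s => s + f x₀) ∘ g') x) ≤ ε/2 := by
      intro x hx
      obtain ⟨j, hjt, hjx⟩ := mem_iUnion₂.mp (htcov hx)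
      have hjx' : dist x j < δ := Metric.mem_ball.mp hjx
      have h1 : |g x - g j| ≤ dist x j := by
        rw [← Real.dist_eq]
        simpa using (hKlip g hgK).dist_le_mul x j
      have h2 : |g' j - g' x| ≤ dist j x := by
        rw [← Real.dist_eq]
        simpa using (hKlip g' hg'K).dist_le_mul j x
      have h3 : |g j - g' j| < δ := by
        have hc := congrFun hg'c ⟨j, hjt⟩
        have : ⌊g j / δ⌋ = ⌊g' j / δ⌋ := hc.symm
        exact hfloor _ _ this
      have heq : dist (f x) (((fun s => s + f x₀) ∘ g') x) = |g x - g' x| := by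
        rw [Real.dist_eq]
        congr 1
        rw [hgx x]
        simp [Function.comp]
        ring
      rw [heq]
      have htri : |g x - g' x| ≤ |g x - g j| + |g j - g' j| + |g' j - g' x| := by
        have := abs_add_le (g x - g j) (g j - g' j)
        have := abs_add_le (g x - g' j) (g' j - g' x)
        calc |g x - g' x| = |(g x - g' j) + (g' j - g' x)| := by ring_nf
          _ ≤ |g x - g' j| + |g' j - g' x| := abs_add_le _ _
          _ ≤ (|g x - g j| + |g j - g' j|) + |g' j - g' x| := by
              have : |g x - g' j| = |(g x - g j) + (g j - g' j)| := by ring_nf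
              rw [this]
              exact add_le_add (abs_add_le _ _) le_rfl
      have hdxj : dist x j ≤ δ := hjx'.le
      have hdjx : dist j x ≤ δ := by rw [dist_comm]; exact hjx'.le
      have : |g x - g' x| ≤ 3 * δ := by
        calc |g x - g' x| ≤ |g x - g j| + |g j - g' j| + |g' j - g' x| := htri
          _ ≤ δ + δ + δ := by
            apply add_le_add (add_le_add (h1.trans hdxj) h3.le) (h2.trans hdjx)
          _ = 3 * δ := by ring
      linarith [this]
    -- conclude
    have hsub : {x | ENNReal.ofReal (ε/2) < edist (f x) (((fun s => s + f x₀) ∘ g') x)} ⊆ Cᶜ := by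
      intro x hx
      simp only [mem_setOf_eq] at hx
      intro hxC
      have : edist (f x) (((fun s => s + f x₀) ∘ g') x) ≤ ENNReal.ofReal (ε/2) := by
        rw [edist_dist]
        exact ENNReal.ofReal_le_ofReal (key x hxC)
      exact absurd hx this.not_gt
    have hle : eKyFan μ f ((fun s => s + f x₀) ∘ g') ≤ ENNReal.ofReal (ε/2) :=
      sInf_le (le_trans (measure_mono hsub) hCc)
    exact lt_of_le_of_lt hle ((ENNReal.ofReal_lt_ofReal_iff hε).mpr (by linarith))
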